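/- Let p be a prime and a, b integers with 0 < a, b < p, and let a' be the inverse of a mod p with 0 < a' < p. Then -(a/b)·Σ_{i=1}^{p-1}[b·i/p]² - (b/a)·Σ_{i=1}^{p-1}[a·i/p]² + 2·Σ_{i=1}^{p-1}[a·i/p][b·i/p] = ((1-p)/(6abp))·(a²(2p-1) + b²(2p-1) - 3abp) + 2·s(a'b, p), where a'b is reduced modulo p to lie in {1,...,p-1}. -/

import Mathlib

/-- The sawtooth function `((x)) = x - ⌊x⌋ - 1/2` for non-integer `x`, and `0` for integer `x`. -/
def saw (x : ℚ) : ℚ := if x.den = 1 then 0 else x - ⌊x⌋ - 1/2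

/-- The Dedekind sum `s(q,p) = Σ_{i=1}^{p-1} ((i/p))((iq/p))`.  It depends on `q` only
through its residue class modulo `p`. -/
noncomputable def dedekindSum (q p : ℤ) : ℚ :=
  ∑ i ∈ Finset.Icc (1 : ℤ) (p - 1), saw ((i : ℚ) / p) * saw ((i * q : ℚ) / p)

lemma den_one_iff (x : ℚ) : x.den = 1 ↔ ∃ z : ℤ, x = z :=
  ⟨fun h => ⟨x.num, (Rat.coe_int_num_of_den_eq_one h).symm⟩,
   fun ⟨z, hz⟩ => hz ▸ Rat.den_intCast z⟩

lemma saw_add_int (x : ℚ) (k : ℤ) : saw (x + k) = saw x := by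
  unfold saw
  by_cases h : x.den = 1
  · have : (x + k).den = 1 := by
      rw [den_one_iff] at h ⊢
      obtain ⟨z, hz⟩ := h
      exact ⟨z + k, by push_cast [hz]; ring⟩
    rw [if_pos h, if_pos this]
  · have : (x + k).den ≠ 1 := by
      rw [den_one_iff] at h
      rw [Ne, den_one_iff]
      rintro ⟨z, hz⟩
      exact h ⟨z - k, by push_cast; linarith⟩
    rw [if_neg h, if_neg this]
    push_cast [Int.floor_add_intCast]
    ring

lemma saw_congr (p : ℕ) (hp : 0 < p) {m m' : ℤ} (h : m ≡ m' [ZMOD (p : ℤ)]) :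
    saw ((m : ℚ) / p) = saw ((m' : ℚ) / p) := by
  obtain ⟨k, hk⟩ := h.dvd
  have hp' : (p : ℚ) ≠ 0 := by positivity
  have hm : (m : ℚ) / p = (m' : ℚ) / p + ((-k : ℤ) : ℚ) := by
    have hmz : (m : ℤ) = m' - p * k := by linarith
    rw [hmz]; push_cast; field_simp; ring
  rw [hm, saw_add_int]

lemma saw_eq_of_not_dvd (p : ℕ) (hp : 0 < p) {m : ℤ} (h : ¬ (p : ℤ) ∣ m) :
    saw ((m : ℚ) / p) = (m : ℚ) / p - ⌊(m : ℚ) / p⌋ - 1/2 := by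
  unfold saw
  rw [if_neg]
  rw [den_one_iff]
  rintro ⟨z, hz⟩
  refine h ⟨z, ?_⟩
  have hp' : (p : ℚ) ≠ 0 := by positivity
  rw [div_eq_iff hp'] at hz
  exact_mod_cast hz.trans (mul_comm _ _)

lemma not_dvd_of_modeq_one (p : ℕ) (hp : p.Prime) {c c' : ℤ}
    (hcc : c * c' ≡ 1 [ZMOD (p : ℤ)]) : ¬ (p : ℤ) ∣ c := by
  intro h
  have hp2 : 2 ≤ (p : ℤ) := by exact_mod_cast hp.two_le
  have h1 : (p : ℤ) ∣ 1 - c * c' := hcc.dvd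
  have h2 : (p : ℤ) ∣ 1 := by
    have := dvd_add h1 (h.mul_right c')
    simpa using this
  have := Int.le_of_dvd one_pos h2
  omega

lemma sum_reindex (p : ℕ) (hp : p.Prime) (c c' : ℤ) (hcc : c * c' ≡ 1 [ZMOD (p : ℤ)])
    (F : ℤ → ℚ) (hF : ∀ m m' : ℤ, m ≡ m' [ZMOD (p : ℤ)] → F m = F m') :
    ∑ i ∈ Finset.Icc (1 : ℤ) ((p : ℤ) - 1), F (c * i)
      = ∑ j ∈ Finset.Icc (1 : ℤ) ((p : ℤ) - 1), F j := by
  have hp2 : 2 ≤ (p : ℤ) := by exact_mod_cast hp.two_le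
  have hp0 : (0 : ℤ) < p := by omega
  have hprime : Prime (p : ℤ) := Nat.prime_iff_prime_int.mp hp
  have hpc : ¬ (p : ℤ) ∣ c := not_dvd_of_modeq_one p hp hcc
  have hpc' : ¬ (p : ℤ) ∣ c' := not_dvd_of_modeq_one p hp (by rwa [mul_comm] at hcc)
  have hmem : ∀ d : ℤ, ¬ (p : ℤ) ∣ d → ∀ i ∈ Finset.Icc (1 : ℤ) ((p : ℤ) - 1),
      (d * i) % p ∈ Finset.Icc (1 : ℤ) ((p : ℤ) - 1) := by
    intro d hd i hi
    rw [Finset.mem_Icc] at hi ⊢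
    have hne : ¬ (p : ℤ) ∣ d * i := by
      intro hdi
      rcases hprime.dvd_mul.mp hdi with h | h
      · exact hd h
      · have := Int.le_of_dvd (by omega) h; omega
    have h1 : 0 ≤ (d * i) % p := Int.emod_nonneg _ (by omega)
    have h2 : (d * i) % p < p := Int.emod_lt_of_pos _ hp0
    have h3 : (d * i) % p ≠ 0 := by
      intro h0
      exact hne (Int.dvd_of_emod_eq_zero h0)
    omega
  have hinvmod : ∀ d d' : ℤ, d * d' ≡ 1 [ZMOD (p : ℤ)] →
      ∀ i ∈ Finset.Icc (1 : ℤ) ((p : ℤ) - 1), (d' * (d * i % p)) % p = i := by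
    intro d d' hdd i hi
    rw [Finset.mem_Icc] at hi
    have h1 : d' * (d * i % p) ≡ d' * (d * i) [ZMOD (p : ℤ)] :=
      Int.ModEq.mul_left d' (Int.emod_emod_of_dvd _ dvd_rfl)
    have h2 : d' * (d * i) ≡ 1 * i [ZMOD (p : ℤ)] := by
      have : d' * (d * i) = (d * d') * i := by ring
      rw [this]
      exact Int.ModEq.mul_right i hdd
    have h3 : d' * (d * i % p) ≡ i [ZMOD (p : ℤ)] := (h1.trans h2).trans (by rw [one_mul])
    have h4 : i % (p : ℤ) = i := Int.emod_eq_of_lt (by omega) (by omega)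
    have h5 := h3.eq
    rw [h4] at h5
    exact h5
  refine Finset.sum_nbij' (fun i => (c * i) % p) (fun j => (c' * j) % p)
    (hmem c hpc) (hmem c' hpc') (hinvmod c c' hcc)
    (hinvmod c' c (by rwa [mul_comm] at hcc)) ?_
  intro i _
  exact hF _ _ (Int.emod_emod_of_dvd _ dvd_rfl).symm

lemma sum_range_id_q (n : ℕ) : ∑ k ∈ Finset.range n, (k : ℚ) = n * (n - 1) / 2 := by
  induction n with
  | zero => simp
  | succ n ih => rw [Finset.sum_range_succ, ih]; push_cast; ring

lemma sum_range_sq_q (n : ℕ) :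
    ∑ k ∈ Finset.range n, (k : ℚ) ^ 2 = n * (n - 1) * (2 * n - 1) / 6 := by
  induction n with
  | zero => simp
  | succ n ih => rw [Finset.sum_range_succ, ih]; push_cast; ring

lemma sum_Icc_int (m : ℕ) (f : ℤ → ℚ) :
    ∑ j ∈ Finset.Icc (1 : ℤ) (m : ℤ), f j = ∑ k ∈ Finset.range m, f (1 + k) := by
  rw [Int.Icc_eq_finset_map, Finset.sum_map]
  have : ((m : ℤ) + 1 - 1).toNat = m := by omega
  rw [this]
  rfl

theorem stmt8 (p : ℕ) (hp : p.Prime) (a b a' : ℤ)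
    (ha0 : 0 < a) (hap : a < p) (hb0 : 0 < b) (hbp : b < p)
    (ha'0 : 0 < a') (ha'p : a' < p) (hinv : a * a' ≡ 1 [ZMOD (p : ℤ)]) :
    -((a : ℚ) / b) * (∑ i ∈ Finset.Icc (1 : ℤ) ((p : ℤ) - 1), (⌊(b * i : ℚ) / p⌋ : ℚ) ^ 2) -
        ((b : ℚ) / a) * (∑ i ∈ Finset.Icc (1 : ℤ) ((p : ℤ) - 1), (⌊(a * i : ℚ) / p⌋ : ℚ) ^ 2) +
        2 * ∑ i ∈ Finset.Icc (1 : ℤ) ((p : ℤ) - 1),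
              (⌊(a * i : ℚ) / p⌋ : ℚ) * (⌊(b * i : ℚ) / p⌋ : ℚ) =
      ((1 - (p : ℚ)) / (6 * a * b * p)) *
          ((a : ℚ) ^ 2 * (2 * p - 1) + (b : ℚ) ^ 2 * (2 * p - 1) - 3 * a * b * p) +
        2 * dedekindSum (a' * b) p := by
  have hp2 : 2 ≤ p := hp.two_le
  have hpz2 : (2 : ℤ) ≤ (p : ℤ) := by exact_mod_cast hp2
  have hp0 : 0 < p := hp.pos
  have hpQ : (p : ℚ) ≠ 0 := by positivity
  have haQ : (a : ℚ) ≠ 0 := by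
    have : (0 : ℚ) < (a : ℚ) := by exact_mod_cast ha0
    positivity
  have hbQ : (b : ℚ) ≠ 0 := by
    have : (0 : ℚ) < (b : ℚ) := by exact_mod_cast hb0
    positivity
  have hprime : Prime (p : ℤ) := Nat.prime_iff_prime_int.mp hp
  have hpa : ¬ (p : ℤ) ∣ a := fun h => by have := Int.le_of_dvd ha0 h; omega
  have hpb : ¬ (p : ℤ) ∣ b := fun h => by have := Int.le_of_dvd hb0 h; omega
  -- inverse of b mod p
  haveI : Fact p.Prime := ⟨hp⟩
  have hbne : ((b : ZMod p) : ZMod p) ≠ 0 := by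
    rw [Ne, ZMod.intCast_zmod_eq_zero_iff_dvd]
    exact_mod_cast hpb
  obtain ⟨b', hbinv⟩ : ∃ b' : ℤ, b * b' ≡ 1 [ZMOD (p : ℤ)] := by
    refine ⟨(((b : ZMod p)⁻¹).val : ℤ), ?_⟩
    rw [← ZMod.intCast_eq_intCast_iff]
    push_cast
    rw [ZMod.natCast_val, ZMod.cast_id]
    exact mul_inv_cancel₀ hbne
  -- basic facts about the index set
  have hpj : ∀ j ∈ Finset.Icc (1 : ℤ) ((p : ℤ) - 1), ¬ (p : ℤ) ∣ j := by
    intro j hj hdvd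
    rw [Finset.mem_Icc] at hj
    have := Int.le_of_dvd (by omega) hdvd
    omega
  have hsawj : ∀ j ∈ Finset.Icc (1 : ℤ) ((p : ℤ) - 1),
      saw ((j : ℚ) / p) = (j : ℚ) / p - 1/2 := by
    intro j hj
    rw [Finset.mem_Icc] at hj
    have h1 : (0 : ℚ) < (j : ℚ) := by exact_mod_cast (by omega : (0:ℤ) < j)
    have h2 : (j : ℚ) < (p : ℚ) := by exact_mod_cast (by omega : j < (p:ℤ))
    have hfl : ⌊(j : ℚ) / p⌋ = 0 := by
      rw [Int.floor_eq_zero_iff]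
      constructor
      · positivity
      · rw [div_lt_one (by positivity)]; exact h2
    rw [saw_eq_of_not_dvd p hp0 (hpj j (by rw [Finset.mem_Icc]; omega)), hfl]
    push_cast
    ring
  -- cardinality
  have hcard : ((Finset.Icc (1 : ℤ) ((p : ℤ) - 1)).card : ℚ) = (p : ℚ) - 1 := by
    rw [Int.card_Icc]
    have h1 : ((p : ℤ) - 1 + 1 - 1).toNat = p - 1 := by omega
    rw [h1, Nat.cast_sub hp.one_le]
    simp
  -- power sums
  have hN : ((p : ℤ) - 1) = ((p - 1 : ℕ) : ℤ) := by omega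
  have hNQ : ((p - 1 : ℕ) : ℚ) = (p : ℚ) - 1 := by
    rw [Nat.cast_sub hp.one_le]; simp
  have hSI : ∑ j ∈ Finset.Icc (1 : ℤ) ((p : ℤ) - 1), (j : ℚ) = (p : ℚ) * ((p : ℚ) - 1) / 2 := by
    rw [hN, sum_Icc_int]
    have : ∀ k ∈ Finset.range (p - 1), ((1 + (k : ℤ) : ℤ) : ℚ) = 1 + (k : ℚ) := by
      intro k _; push_cast; ring
    rw [Finset.sum_congr rfl this, Finset.sum_add_distrib, Finset.sum_const, Finset.card_range,
      sum_range_id_q, nsmul_eq_mul, hNQ]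
    have h2 : (2:ℚ) ≤ (p:ℚ) := by exact_mod_cast hp2
    field_simp
    ring
  have hSI2 : ∑ j ∈ Finset.Icc (1 : ℤ) ((p : ℤ) - 1), (j : ℚ) ^ 2
      = (p : ℚ) * ((p : ℚ) - 1) * (2 * (p : ℚ) - 1) / 6 := by
    rw [hN, sum_Icc_int]
    have : ∀ k ∈ Finset.range (p - 1), ((1 + (k : ℤ) : ℤ) : ℚ) ^ 2
        = 1 + 2 * (k : ℚ) + (k : ℚ) ^ 2 := by
      intro k _; push_cast; ring
    rw [Finset.sum_congr rfl this, Finset.sum_add_distrib, Finset.sum_add_distrib,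
      Finset.sum_const, Finset.card_range, ← Finset.mul_sum, sum_range_id_q, sum_range_sq_q,
      nsmul_eq_mul, hNQ]
    field_simp
    ring
  -- base saw sums
  have hB0 : ∑ j ∈ Finset.Icc (1 : ℤ) ((p : ℤ) - 1), saw ((j : ℚ) / p) = 0 := by
    rw [Finset.sum_congr rfl hsawj, Finset.sum_sub_distrib, ← Finset.sum_div,
      Finset.sum_const, nsmul_eq_mul, hSI, hcard]
    field_simp
    ring
  have hB1 : ∑ j ∈ Finset.Icc (1 : ℤ) ((p : ℤ) - 1), (saw ((j : ℚ) / p)) ^ 2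
      = ((p : ℚ) - 1) * ((p : ℚ) - 2) / (12 * p) := by
    have e1 : ∀ j ∈ Finset.Icc (1 : ℤ) ((p : ℤ) - 1),
        (saw ((j : ℚ) / p)) ^ 2
          = (j : ℚ) ^ 2 * (1 / (p : ℚ) ^ 2) - (j : ℚ) * (1 / (p : ℚ)) + 1/4 := by
      intro j hj
      rw [hsawj j hj]
      field_simp
      ring
    rw [Finset.sum_congr rfl e1, Finset.sum_add_distrib, Finset.sum_sub_distrib,
      ← Finset.sum_mul, ← Finset.sum_mul, Finset.sum_const, nsmul_eq_mul,
      hSI, hSI2, hcard]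
    field_simp
    ring
  -- reindexed saw sums
  have hFcong : ∀ m m' : ℤ, m ≡ m' [ZMOD (p : ℤ)] → saw ((m : ℚ) / p) = saw ((m' : ℚ) / p) :=
    fun m m' h => saw_congr p hp0 h
  have hSf : ∑ i ∈ Finset.Icc (1 : ℤ) ((p : ℤ) - 1), saw (((a * i : ℤ) : ℚ) / p) = 0 := by
    rw [sum_reindex p hp a a' hinv (fun m => saw ((m : ℚ) / p)) hFcong]
    exact hB0
  have hSg : ∑ i ∈ Finset.Icc (1 : ℤ) ((p : ℤ) - 1), saw (((b * i : ℤ) : ℚ) / p) = 0 := by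
    rw [sum_reindex p hp b b' hbinv (fun m => saw ((m : ℚ) / p)) hFcong]
    exact hB0
  have hSff : ∑ i ∈ Finset.Icc (1 : ℤ) ((p : ℤ) - 1), (saw (((a * i : ℤ) : ℚ) / p)) ^ 2
      = ((p : ℚ) - 1) * ((p : ℚ) - 2) / (12 * p) := by
    rw [sum_reindex p hp a a' hinv (fun m => (saw ((m : ℚ) / p)) ^ 2)
      (fun m m' h => congrArg (· ^ 2) (hFcong m m' h))]
    exact hB1
  have hSgg : ∑ i ∈ Finset.Icc (1 : ℤ) ((p : ℤ) - 1), (saw (((b * i : ℤ) : ℚ) / p)) ^ 2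
      = ((p : ℚ) - 1) * ((p : ℚ) - 2) / (12 * p) := by
    rw [sum_reindex p hp b b' hbinv (fun m => (saw ((m : ℚ) / p)) ^ 2)
      (fun m m' h => congrArg (· ^ 2) (hFcong m m' h))]
    exact hB1
  have modeq : ∀ i : ℤ, a * i * (a' * b) ≡ b * i [ZMOD (p : ℤ)] := by
    intro i
    calc a * i * (a' * b) = a * a' * (i * b) := by ring
      _ ≡ 1 * (i * b) [ZMOD (p : ℤ)] := Int.ModEq.mul_right _ hinv
      _ = b * i := by ring
  have hSfg : ∑ i ∈ Finset.Icc (1 : ℤ) ((p : ℤ) - 1),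
      saw (((a * i : ℤ) : ℚ) / p) * saw (((b * i : ℤ) : ℚ) / p)
      = dedekindSum (a' * b) p := by
    have e1 : ∀ i ∈ Finset.Icc (1 : ℤ) ((p : ℤ) - 1),
        saw (((a * i : ℤ) : ℚ) / p) * saw (((b * i : ℤ) : ℚ) / p)
        = (fun m : ℤ => saw ((m : ℚ) / p) * saw (((m * (a' * b) : ℤ) : ℚ) / p)) (a * i) := by
      intro i _
      dsimp only
      rw [hFcong (a * i * (a' * b)) (b * i) (modeq i)]
    rw [Finset.sum_congr rfl e1,
      sum_reindex p hp a a' hinv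
        (fun m : ℤ => saw ((m : ℚ) / p) * saw (((m * (a' * b) : ℤ) : ℚ) / p))
        (fun m m' h => by
          rw [hFcong m m' h,
            hFcong (m * (a' * b)) (m' * (a' * b)) (Int.ModEq.mul_right _ h)])]
    unfold dedekindSum
    apply Finset.sum_congr rfl
    intro j _
    push_cast
    ring_nf
  -- floor expressions
  have hx : ∀ i ∈ Finset.Icc (1 : ℤ) ((p : ℤ) - 1),
      (⌊(a * i : ℚ) / p⌋ : ℚ) = (a : ℚ) * i / p - 1/2 - saw (((a * i : ℤ) : ℚ) / p) := by
    intro i hi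
    have hnd : ¬ (p : ℤ) ∣ a * i := by
      intro h
      rcases hprime.dvd_mul.mp h with h | h
      · exact hpa h
      · exact hpj i hi h
    have := saw_eq_of_not_dvd p hp0 hnd
    push_cast at this ⊢
    linarith
  have hy : ∀ i ∈ Finset.Icc (1 : ℤ) ((p : ℤ) - 1),
      (⌊(b * i : ℚ) / p⌋ : ℚ) = (b : ℚ) * i / p - 1/2 - saw (((b * i : ℤ) : ℚ) / p) := by
    intro i hi
    have hnd : ¬ (p : ℤ) ∣ b * i := by
      intro h
      rcases hprime.dvd_mul.mp h with h | h
      · exact hpb h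
      · exact hpj i hi h
    have := saw_eq_of_not_dvd p hp0 hnd
    push_cast at this ⊢
    linarith
  -- pointwise identity
  have key : ∀ i ∈ Finset.Icc (1 : ℤ) ((p : ℤ) - 1),
      -((a : ℚ) / b) * (⌊(b * i : ℚ) / p⌋ : ℚ) ^ 2
        - ((b : ℚ) / a) * (⌊(a * i : ℚ) / p⌋ : ℚ) ^ 2
        + 2 * ((⌊(a * i : ℚ) / p⌋ : ℚ) * (⌊(b * i : ℚ) / p⌋ : ℚ))
      = (-((((b : ℚ) - a) / 2) ^ 2 / (a * b)))
        + (-(((b : ℚ) - a)) / a) * saw (((a * i : ℤ) : ℚ) / p)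
        + ((((b : ℚ) - a)) / b) * saw (((b * i : ℤ) : ℚ) / p)
        + (-(b : ℚ) / a) * (saw (((a * i : ℤ) : ℚ) / p)) ^ 2
        + (-(a : ℚ) / b) * (saw (((b * i : ℤ) : ℚ) / p)) ^ 2
        + 2 * (saw (((a * i : ℤ) : ℚ) / p) * saw (((b * i : ℤ) : ℚ) / p)) := by
    intro i hi
    rw [hx i hi, hy i hi]
    field_simp
    ring
  -- assemble
  calc
    -((a : ℚ) / b) * (∑ i ∈ Finset.Icc (1 : ℤ) ((p : ℤ) - 1), (⌊(b * i : ℚ) / p⌋ : ℚ) ^ 2) -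
        ((b : ℚ) / a) * (∑ i ∈ Finset.Icc (1 : ℤ) ((p : ℤ) - 1), (⌊(a * i : ℚ) / p⌋ : ℚ) ^ 2) +
        2 * ∑ i ∈ Finset.Icc (1 : ℤ) ((p : ℤ) - 1),
              (⌊(a * i : ℚ) / p⌋ : ℚ) * (⌊(b * i : ℚ) / p⌋ : ℚ)
        = ∑ i ∈ Finset.Icc (1 : ℤ) ((p : ℤ) - 1),
            (-((a : ℚ) / b) * (⌊(b * i : ℚ) / p⌋ : ℚ) ^ 2
              - ((b : ℚ) / a) * (⌊(a * i : ℚ) / p⌋ : ℚ) ^ 2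
              + 2 * ((⌊(a * i : ℚ) / p⌋ : ℚ) * (⌊(b * i : ℚ) / p⌋ : ℚ))) := by
          rw [Finset.sum_add_distrib, Finset.sum_sub_distrib,
            ← Finset.mul_sum, ← Finset.mul_sum, ← Finset.mul_sum]
    _ = ∑ i ∈ Finset.Icc (1 : ℤ) ((p : ℤ) - 1),
          ((-((((b : ℚ) - a) / 2) ^ 2 / (a * b)))
            + (-(((b : ℚ) - a)) / a) * saw (((a * i : ℤ) : ℚ) / p)
            + ((((b : ℚ) - a)) / b) * saw (((b * i : ℤ) : ℚ) / p)
            + (-(b : ℚ) / a) * (saw (((a * i : ℤ) : ℚ) / p)) ^ 2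
            + (-(a : ℚ) / b) * (saw (((b * i : ℤ) : ℚ) / p)) ^ 2
            + 2 * (saw (((a * i : ℤ) : ℚ) / p) * saw (((b * i : ℤ) : ℚ) / p))) :=
        Finset.sum_congr rfl key
    _ = ((1 - (p : ℚ)) / (6 * a * b * p)) *
          ((a : ℚ) ^ 2 * (2 * p - 1) + (b : ℚ) ^ 2 * (2 * p - 1) - 3 * a * b * p) +
        2 * dedekindSum (a' * b) p := by
        rw [Finset.sum_add_distrib, Finset.sum_add_distrib, Finset.sum_add_distrib,
          Finset.sum_add_distrib, Finset.sum_add_distrib, Finset.sum_const, nsmul_eq_mul,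
          ← Finset.mul_sum, ← Finset.mul_sum, ← Finset.mul_sum, ← Finset.mul_sum,
          ← Finset.mul_sum, hSf, hSg, hSff, hSgg, hSfg, hcard]
        field_simp
        ring
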